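/- arXiv:2504.17369 — 3 statements merged into one kernel-verified Lean document; each statement's English description precedes it below -/
import Mathlib

section
/- Let A be a commutative ring, u ∈ A, and h ∈ A. Then the localization of the quotient ring A[w]/(u·w − h) at the image of u is isomorphic as an A-algebra to the localization A[u⁻¹] of A at u, via the map sending w to h·u⁻¹. -/
open Polynomial

set_option maxHeartbeats 1000000 in
/-- For a commutative ring `A` and `u h ∈ A`, the localization of `A[w]/(u·w − h)` at the
image of `u` is isomorphic, as an `A`-algebra, to the localization `A[u⁻¹]`, via a map
sending (the image of) `w` to `h·u⁻¹`. -/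
theorem stmt_2 (A : Type*) [CommRing A] (u h : A) :
    ∃ e : Localization.Away
        ((Ideal.Quotient.mk (Ideal.span {C u * Polynomial.X - C h})) (C u)) ≃ₐ[A]
        Localization.Away u,
      e (algebraMap _ _ ((Ideal.Quotient.mk (Ideal.span {C u * Polynomial.X - C h}))
          Polynomial.X))
        = algebraMap A _ h * IsLocalization.Away.invSelf u := by
  set I : Ideal A[X] := Ideal.span {C u * Polynomial.X - C h} with hI
  set mk := Ideal.Quotient.mk I with hmk
  set ubar : A[X] ⧸ I := mk (C u) with hubar
  set L := Localization.Away ubar with hL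
  -- basic relation: ubar * mk X = mk (C h)
  have hrel : ubar * mk X = mk (C h) := by
    have h0 : mk (C u * Polynomial.X - C h) = 0 := by
      rw [hmk, Ideal.Quotient.eq_zero_iff_mem]
      exact Ideal.subset_span rfl
    have := sub_eq_zero.mp (by simpa [map_sub] using h0)
    simpa [map_mul] using this
  have hconst : ∀ (n : ℕ) (c : A), ubar ^ n * mk (C c) = mk (C (u ^ n * c)) := by
    intro n c
    rw [hubar, ← map_pow, ← map_mul]
    congr 1
    rw [C_mul, C_pow]
  -- algebraMap A L factors
  have halg : ∀ a : A, algebraMap A L a = algebraMap _ L (mk (C a)) := by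
    intro a
    rw [IsScalarTower.algebraMap_apply A (A[X] ⧸ I) L]
    congr 1
  -- every element of the quotient becomes "constant" after multiplying by a power of ubar
  have key : ∀ f : A[X], ∃ (n : ℕ) (a : A), ubar ^ n * mk f = mk (C a) := by
    intro f
    induction f using Polynomial.induction_on with
    | C a => exact ⟨0, a, by simp⟩
    | add p q hp hq =>
      obtain ⟨n, a, ha⟩ := hp
      obtain ⟨m, b, hb⟩ := hq
      refine ⟨n + m, u ^ m * a + u ^ n * b, ?_⟩
      have e1 : ubar ^ (n+m) * (mk p + mk q)
          = ubar ^ m * (ubar ^ n * mk p) + ubar ^ n * (ubar ^ m * mk q) := by ring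
      rw [map_add, e1, ha, hb, hconst, hconst, ← map_add, ← C_add]
    | monomial k a hk =>
      obtain ⟨n, b, hb⟩ := hk
      refine ⟨n + 1, b * h, ?_⟩
      have e1 : ubar ^ (n+1) * mk (C a * Polynomial.X ^ (k+1))
          = (ubar ^ n * mk (C a * Polynomial.X ^ k)) * (ubar * mk Polynomial.X) := by
        simp only [pow_succ, map_mul, map_pow]
        ring
      rw [e1, hb, hrel, ← map_mul, ← C_mul]
  -- the aeval map detecting the kernel
  have hθ : ∀ p ∈ I, Polynomial.aeval (algebraMap A (Localization.Away u) h
      * IsLocalization.Away.invSelf u) p = 0 := by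
    intro p hp
    rw [hI] at hp
    refine (Ideal.span_le (I := RingHom.ker (Polynomial.aeval _ : A[X] →ₐ[A] _).toRingHom)).mpr ?_ hp
    rintro q rfl
    simp only [SetLike.mem_coe, RingHom.mem_ker, AlgHom.toRingHom_eq_coe, RingHom.coe_coe,
      map_sub, map_mul, aeval_C, aeval_X]
    rw [sub_eq_zero]
    rw [show algebraMap A (Localization.Away u) u *
        (algebraMap A (Localization.Away u) h * IsLocalization.Away.invSelf u)
        = algebraMap A (Localization.Away u) h *
          (algebraMap A (Localization.Away u) u * IsLocalization.Away.invSelf u) by ring,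
      IsLocalization.Away.mul_invSelf, mul_one]
  -- L is a localization of A away from u
  have hloc : IsLocalization (Submonoid.powers u) L := by
    constructor
    constructor
    · rintro ⟨y, n, rfl⟩
      simp only
      rw [halg]
      have e1 : mk (C (u ^ n)) = ubar ^ n := by rw [hubar, ← map_pow, C_pow]
      rw [e1, map_pow]
      exact IsUnit.pow n (IsLocalization.map_units L ⟨ubar, Submonoid.mem_powers _⟩)
    · intro z
      obtain ⟨⟨q, s⟩, hz⟩ := IsLocalization.surj (Submonoid.powers ubar) z
      obtain ⟨n, hn⟩ := s.2
      obtain ⟨f, rfl⟩ := Ideal.Quotient.mk_surjective (I := I) q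
      obtain ⟨m, a, ha⟩ := key f
      refine ⟨⟨a, ⟨u ^ (n + m), n + m, rfl⟩⟩, ?_⟩
      simp only
      have hs : (s : A[X] ⧸ I) = ubar ^ n := hn.symm
      rw [halg, halg]
      have e1 : mk (C (u ^ (n+m))) = ubar ^ (n + m) := by rw [hubar, ← map_pow, C_pow]
      rw [e1]
      have h2 : z * algebraMap _ L (ubar ^ (n + m))
          = algebraMap _ L (ubar ^ m) * (z * algebraMap _ L (s : A[X] ⧸ I)) := by
        rw [hs, map_pow, map_pow, map_pow]; ring
      rw [h2, hz, ← map_mul, ha]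
    · intro a b hab
      rw [halg, halg] at hab
      obtain ⟨⟨c, n, rfl⟩, hc⟩ := (IsLocalization.eq_iff_exists (Submonoid.powers ubar) L).mp hab
      simp only at hc
      have hmem : mk (C (u ^ n * a) - C (u ^ n * b)) = 0 := by
        rw [map_sub, ← hconst, ← hconst, sub_eq_zero]
        exact hc
      rw [map_sub, ← map_sub, hmk, Ideal.Quotient.eq_zero_iff_mem] at hmem
      have h0 := hθ _ hmem
      simp only [map_sub, aeval_C] at h0
      rw [sub_eq_zero] at h0
      obtain ⟨⟨m', m, rfl⟩, hm⟩ := (IsLocalization.eq_iff_exists (Submonoid.powers u)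
        (Localization.Away u)).mp h0
      refine ⟨⟨u ^ (m + n), m + n, rfl⟩, ?_⟩
      simp only at hm ⊢
      calc u ^ (m + n) * a = u ^ m * (u ^ n * a) := by ring
        _ = u ^ m * (u ^ n * b) := hm
        _ = u ^ (m + n) * b := by ring
  -- build the equivalence
  letI := hloc
  refine ⟨IsLocalization.algEquiv (Submonoid.powers u) L (Localization.Away u), ?_⟩
  set e := IsLocalization.algEquiv (Submonoid.powers u) L (Localization.Away u) with he
  have hu_unit : IsUnit (algebraMap A (Localization.Away u) u) :=
    IsLocalization.map_units _ ⟨u, Submonoid.mem_powers u⟩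
  apply hu_unit.mul_left_cancel
  have lhs : algebraMap A (Localization.Away u) u * e (algebraMap _ L (mk Polynomial.X))
      = algebraMap A (Localization.Away u) h := by
    have h1 : algebraMap A (Localization.Away u) u = e (algebraMap A L u) := by
      rw [AlgEquiv.commutes]
    rw [h1, ← map_mul, halg, ← map_mul, ← hubar, hrel, ← halg, AlgEquiv.commutes]
  rw [lhs]
  rw [show algebraMap A (Localization.Away u) u *
      (algebraMap A (Localization.Away u) h * IsLocalization.Away.invSelf u)
      = algebraMap A (Localization.Away u) h *
        (algebraMap A (Localization.Away u) u * IsLocalization.Away.invSelf u) by ring,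
    IsLocalization.Away.mul_invSelf, mul_one]
end

section
/- Let K be a field of characteristic zero. The quotient ring K[x,z,w]/(x² + 4z³ + w⁶) is an integral domain. -/
open MvPolynomial

lemma aux_deg3 (K : Type*) [Field K] [CharZero K] :
    ¬ ∃ t : MvPolynomial (Fin 2) K, t * t = -(4 * (X 0) ^ 3 + (X 1) ^ 6) := by
  set e := (MvPolynomial.finSuccEquiv K 1).toRingEquiv
  have him : e (4 * (X 0) ^ 3 + (X 1) ^ 6) =
      Polynomial.C (4 : MvPolynomial (Fin 1) K) * Polynomial.X ^ 3
        + Polynomial.C ((X 0) ^ 6) := by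
    have h1 : (X (1 : Fin 2) : MvPolynomial (Fin 2) K) = X (Fin.succ 0) := rfl
    simp [e, h1, map_add, map_mul, map_pow, map_ofNat, finSuccEquiv_X_zero,
      finSuccEquiv_X_succ]
  have hdeg : (e (4 * (X 0) ^ 3 + (X 1) ^ 6)).natDegree = 3 := by
    rw [him]
    compute_degree!
  rintro ⟨t, ht⟩
  have ht' : e t * e t = -(e (4 * (X 0) ^ 3 + (X 1) ^ 6)) := by
    rw [← map_mul, ht, map_neg]
  have htne : e t ≠ 0 := by
    intro h
    rw [h, mul_zero, eq_comm, neg_eq_zero] at ht'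
    rw [ht'] at hdeg
    simp at hdeg
  have h3 : (e t * e t).natDegree = 3 := by rw [ht', Polynomial.natDegree_neg, hdeg]
  rw [Polynomial.natDegree_mul htne htne] at h3
  omega

/-- Over a field of characteristic zero, `K[x,z,w]/(x² + 4z³ + w⁶)` is an integral domain. -/
theorem stmt_4 (K : Type*) [Field K] [CharZero K] :
    IsDomain (MvPolynomial (Fin 3) K ⧸
      Ideal.span {((X 0) ^ 2 + 4 * (X 1) ^ 3 + (X 2) ^ 6 : MvPolynomial (Fin 3) K)}) := by
  have hnsq := aux_deg3 K
  set c : MvPolynomial (Fin 2) K := 4 * (X 0) ^ 3 + (X 1) ^ 6 with hc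
  set p : MvPolynomial (Fin 3) K := (X 0) ^ 2 + 4 * (X 1) ^ 3 + (X 2) ^ 6 with hp
  set e := (MvPolynomial.finSuccEquiv K 2).toRingEquiv with he
  have him : e p = Polynomial.X ^ 2 + Polynomial.C c := by
    have h1 : (X (1 : Fin 3) : MvPolynomial (Fin 3) K) = X (Fin.succ 0) := rfl
    have h2 : (X (2 : Fin 3) : MvPolynomial (Fin 3) K) = X (Fin.succ 1) := rfl
    rw [hp, hc]
    simp only [he, map_add, map_mul, map_pow, map_ofNat, h1, h2,
      AlgEquiv.toRingEquiv_eq_coe, AlgEquiv.coe_ringEquiv,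
      finSuccEquiv_X_zero, finSuccEquiv_X_succ]
    ring
  have hmonic : (e p).Monic := by
    rw [him]; exact Polynomial.monic_X_pow_add_C _ two_ne_zero
  have hnd : (e p).natDegree = 2 := by
    rw [him]; compute_degree!
  have hirred : Irreducible (e p) := by
    by_contra h
    obtain ⟨c₁, c₂, hmul, hadd⟩ :=
      (hmonic.not_irreducible_iff_exists_add_mul_eq_coeff hnd).mp h
    rw [him] at hmul hadd
    simp only [Polynomial.coeff_add, Polynomial.coeff_X_pow,
      Polynomial.coeff_C] at hmul hadd
    norm_num at hmul hadd
    exact hnsq ⟨c₁, by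
      have h2 : c₂ = -c₁ := by linear_combination -hadd
      rw [h2] at hmul
      linear_combination hmul⟩
  have hprime : Prime (e p) := UniqueFactorizationMonoid.irreducible_iff_prime.mp hirred
  have hprime' : Prime p := by
    exact (MulEquiv.prime_iff e).mp hprime
  rw [Ideal.Quotient.isDomain_iff_prime]
  exact (Ideal.span_singleton_prime hprime'.ne_zero).mpr hprime'
end

section
/- Let K be a field of characteristic zero. The quotient ring R = K[x,y,z,w₁,w₂]/(x² − y²z + 4z³ + y²w₁ + w₂⁶) is an integral domain. -/
open MvPolynomial

section Aux

variable (K : Type*) [Field K] [CharZero K]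

private noncomputable abbrev auxA (K : Type*) [Field K] := MvPolynomial (Fin 4) K

private instance : IsIntegrallyClosed (auxA K) :=
  UniqueFactorizationMonoid.instIsIntegrallyClosed

private noncomputable def auxa : auxA K :=
  (X 0)^2 * X 1 - 4 * (X 1)^3 - (X 0)^2 * X 2 - (X 3)^6

private lemma aux_no_sqrt (p : auxA K) : p ^ 2 ≠ auxa K := by
  intro h
  have h2 := congrArg
    (MvPolynomial.aeval (fun i : Fin 4 => if i = 1 then (Polynomial.X : Polynomial K) else 0)) h
  rw [map_pow] at h2
  have ha : MvPolynomial.aeval (fun i : Fin 4 => if i = 1 then (Polynomial.X : Polynomial K) else 0)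
      (auxa K) = Polynomial.C (-4 : K) * Polynomial.X ^ 3 := by
    simp [auxa, map_ofNat]
  rw [ha] at h2
  have h3 : (Polynomial.C (-4 : K) * Polynomial.X ^ 3).natDegree = 3 :=
    Polynomial.natDegree_C_mul_X_pow 3 (-4 : K) (by norm_num)
  have := congrArg Polynomial.natDegree h2
  rw [Polynomial.natDegree_pow, h3] at this
  omega

private lemma aux_irr_frac : Irreducible ((Polynomial.X ^ 2 - Polynomial.C (auxa K)).map
    (algebraMap (auxA K) (FractionRing (auxA K)))) := by
  rw [Polynomial.map_sub, Polynomial.map_pow, Polynomial.map_X, Polynomial.map_C]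
  apply X_pow_sub_C_irreducible_of_prime Nat.prime_two
  intro b hb
  have hbint : IsIntegral (auxA K) b := by
    refine ⟨Polynomial.X ^ 2 - Polynomial.C (auxa K),
      Polynomial.monic_X_pow_sub_C _ (by norm_num), ?_⟩
    simp [hb]
  obtain ⟨p, hp⟩ := IsIntegrallyClosed.isIntegral_iff.mp hbint
  apply aux_no_sqrt K p
  apply IsFractionRing.injective (auxA K) (FractionRing (auxA K))
  rw [map_pow, hp, hb]

private lemma aux_irr_poly : Irreducible (Polynomial.X ^ 2 - Polynomial.C (auxa K)) :=
  (Polynomial.Monic.irreducible_iff_irreducible_map_fraction_map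
    (Polynomial.monic_X_pow_sub_C _ (by norm_num))).mpr (aux_irr_frac K)

private noncomputable def auxf : MvPolynomial (Fin 5) K :=
  (X 0) ^ 2 - (X 1) ^ 2 * X 2 + 4 * (X 2) ^ 3 + (X 1) ^ 2 * X 3 + (X 4) ^ 6

private lemma aux_eff :
    finSuccEquiv K 4 (auxf K) = Polynomial.X ^ 2 - Polynomial.C (auxa K) := by
  have e1 : (X 1 : MvPolynomial (Fin 5) K) = X (Fin.succ 0) := rfl
  have e2 : (X 2 : MvPolynomial (Fin 5) K) = X (Fin.succ 1) := rfl
  have e3 : (X 3 : MvPolynomial (Fin 5) K) = X (Fin.succ 2) := rfl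
  have e4 : (X 4 : MvPolynomial (Fin 5) K) = X (Fin.succ 3) := rfl
  rw [auxf, e1, e2, e3, e4]
  simp only [map_add, map_sub, map_mul, map_pow, map_ofNat,
    finSuccEquiv_X_zero, finSuccEquiv_X_succ, auxa]
  ring

private lemma aux_irr_ff : Irreducible (auxf K) := by
  rw [← MulEquiv.irreducible_iff (finSuccEquiv K 4), aux_eff]
  exact aux_irr_poly K

end Aux

/-- Over a field of characteristic zero,
`K[x,y,z,w₁,w₂]/(x² − y²z + 4z³ + y²w₁ + w₂⁶)` is an integral domain. -/
theorem stmt_6 (K : Type*) [Field K] [CharZero K] :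
    IsDomain (MvPolynomial (Fin 5) K ⧸
      Ideal.span {((X 0) ^ 2 - (X 1) ^ 2 * X 2 + 4 * (X 2) ^ 3
        + (X 1) ^ 2 * X 3 + (X 4) ^ 6 : MvPolynomial (Fin 5) K)}) := by
  have hirr := aux_irr_ff K
  have hprime : Prime (auxf K) := (UniqueFactorizationMonoid.irreducible_iff_prime).mp hirr
  rw [Ideal.Quotient.isDomain_iff_prime]
  rw [show ((X 0) ^ 2 - (X 1) ^ 2 * X 2 + 4 * (X 2) ^ 3
        + (X 1) ^ 2 * X 3 + (X 4) ^ 6 : MvPolynomial (Fin 5) K) = auxf K from rfl]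
  exact (Ideal.span_singleton_prime hprime.ne_zero).mpr hprime
end
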